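/- Let n ≥ 1, A ∈ ℂ^{n×n} and δ > 0. Then there exists a nonzero polynomial q in two variables with real coefficients such that every point λ = x + iy on the topological boundary of the δ-pseudospectrum Spec_δ(A) satisfies q(x, y) = 0 (i.e., ∂Spec_δ(A) is contained in a real algebraic curve). -/

import Mathlib

open Matrix

/-- The operator norm of a complex matrix, induced by the Euclidean norm on `ℂⁿ`. -/
noncomputable def l2OpNorm {ι : Type*} [Fintype ι] [DecidableEq ι]
    (E : Matrix ι ι ℂ) : ℝ :=
  ‖Matrix.toEuclideanCLM (𝕜 := ℂ) E‖

/-- The δ-pseudospectrum of a matrix: the union of the spectra of all perturbations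
`A + E` with `‖E‖ ≤ δ` (operator norm induced by the Euclidean norm). -/
noncomputable def pseudospectrum {ι : Type*} [Fintype ι] [DecidableEq ι]
    (δ : ℝ) (A : Matrix ι ι ℂ) : Set ℂ :=
  ⋃ E ∈ {E : Matrix ι ι ℂ | l2OpNorm E ≤ δ}, spectrum ℂ (A + E)

namespace PseudoAux

open MvPolynomial ContinuousLinearMap
open scoped ComplexOrder

variable {n : ℕ}

abbrev Es (n : ℕ) := EuclideanSpace ℂ (Fin n)

lemma WithLp.equiv_neg (x : Es n) :
    WithLp.equiv 2 (Fin n → ℂ) (-x) = -WithLp.equiv 2 (Fin n → ℂ) x := rfl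

lemma WithLp.equiv_smul (c : ℂ) (x : Es n) :
    WithLp.equiv 2 (Fin n → ℂ) (c • x) = c • WithLp.equiv 2 (Fin n → ℂ) x := rfl

lemma piLp_equiv_toEuclideanCLM' (M : Matrix (Fin n) (Fin n) ℂ) (x : Es n) :
    WithLp.equiv 2 (Fin n → ℂ) (Matrix.toEuclideanCLM (𝕜 := ℂ) M x)
      = Matrix.toLin' M (WithLp.equiv 2 (Fin n → ℂ) x) := rfl

/-- The CLM `A - λ`. -/
noncomputable def Tc (A : Matrix (Fin n) (Fin n) ℂ) (lam : ℂ) : Es n →L[ℂ] Es n :=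
  Matrix.toEuclideanCLM (𝕜 := ℂ) (A - lam • 1)

/-- smallest singular value of `A - λ`. -/
noncomputable def sv (A : Matrix (Fin n) (Fin n) ℂ) (lam : ℂ) : ℝ :=
  ⨅ v : Metric.sphere (0 : Es n) 1, ‖Tc A lam v‖

variable (A : Matrix (Fin n) (Fin n) ℂ) (lam : ℂ)

lemma equiv_Tc_apply (u : Es n) :
    WithLp.equiv 2 _ (Tc A lam u) = (A - lam • 1) *ᵥ (WithLp.equiv 2 _ u) := by
  simp [Tc, Matrix.ofLp_toEuclideanCLM, Matrix.sub_mulVec, Matrix.smul_mulVec]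

lemma Tc_apply_eq (u : Es n) :
    Tc A lam u = Matrix.toEuclideanCLM (𝕜 := ℂ) A u - lam • u := by
  rw [Tc, map_sub, _root_.map_smul, _root_.map_one]
  simp

lemma sv_bddBelow : BddBelow (Set.range fun v : Metric.sphere (0 : Es n) 1 => ‖Tc A lam v‖) :=
  ⟨0, by rintro x ⟨v, rfl⟩; exact norm_nonneg _⟩

lemma sv_le {v : Es n} (hv : ‖v‖ = 1) : sv A lam ≤ ‖Tc A lam v‖ := by
  exact ciInf_le (sv_bddBelow A lam) ⟨v, by simp [hv]⟩

lemma sphere_nonempty (hn : 1 ≤ n) : (Metric.sphere (0 : Es n) 1).Nonempty := by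
  haveI : Nonempty (Fin n) := ⟨⟨0, hn⟩⟩
  haveI : Nontrivial (Es n) :=
    ⟨EuclideanSpace.single (Classical.arbitrary _) 1, 0, by
      intro h
      have := congrFun (congrArg (WithLp.equiv 2 _) h) (Classical.arbitrary _)
      exact absurd this (by simp)⟩
  exact NormedSpace.sphere_nonempty.mpr zero_le_one

lemma exists_min (hn : 1 ≤ n) :
    ∃ v : Es n, ‖v‖ = 1 ∧ ‖Tc A lam v‖ = sv A lam ∧
      IsMinOn (fun x => ‖Tc A lam x‖) (Metric.sphere (0 : Es n) 1) v := by
  obtain ⟨v, hv, hmin⟩ := (isCompact_sphere (0 : Es n) 1).exists_isMinOn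
    (sphere_nonempty hn)
    ((continuous_norm.comp (Tc A lam).continuous).continuousOn)
  have hv1 : ‖v‖ = 1 := by simpa using hv
  refine ⟨v, hv1, ?_, hmin⟩
  refine le_antisymm ?_ (sv_le A lam hv1)
  haveI : Nonempty (Metric.sphere (0 : Es n) 1) := (sphere_nonempty hn).to_subtype
  exact le_ciInf fun ⟨w, hw⟩ => hmin hw

lemma key_ineq (hn : 1 ≤ n) (a b : ℂ) : sv A a ≤ sv A b + dist a b := by
  obtain ⟨v, hv1, hveq, -⟩ := exists_min A b hn
  calc sv A a ≤ ‖Tc A a v‖ := sv_le A a hv1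
    _ ≤ ‖Tc A b v‖ + ‖Tc A a v - Tc A b v‖ := by
        have := norm_sub_norm_le (Tc A a v) (Tc A b v)
        linarith [abs_le.mp (abs_norm_sub_norm_le (Tc A a v) (Tc A b v))]
    _ ≤ sv A b + dist a b := by
        have h1 : Tc A a v - Tc A b v = (b - a) • v := by
          rw [Tc_apply_eq, Tc_apply_eq]
          rw [sub_smul]
          abel
        rw [hveq, h1, norm_smul, hv1, mul_one, dist_eq_norm, norm_sub_rev]

lemma sv_lipschitz (hn : 1 ≤ n) : LipschitzWith 1 (sv A) := by
  refine LipschitzWith.of_dist_le_mul fun a b => ?_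
  rw [NNReal.coe_one, one_mul, Real.dist_eq]
  rw [abs_sub_le_iff]
  constructor
  · linarith [key_ineq A hn a b]
  · have := key_ineq A hn b a
    rw [dist_comm] at this
    linarith

lemma mem_pseudospectrum_iff (hn : 1 ≤ n) {δ : ℝ} (hδ : 0 ≤ δ) :
    lam ∈ pseudospectrum δ A ↔ sv A lam ≤ δ := by
  constructor
  · intro h
    simp only [pseudospectrum, Set.mem_iUnion, Set.mem_setOf_eq] at h
    obtain ⟨E0, hE0, hspec⟩ := h
    rw [spectrum.mem_iff] at hspec
    have hdet : (lam • 1 - (A + E0)).det = 0 := by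
      by_contra hne
      rw [Algebra.algebraMap_eq_smul_one] at hspec
      exact hspec ((Matrix.isUnit_iff_isUnit_det _).mpr (isUnit_iff_ne_zero.mpr hne))
    obtain ⟨v, hv0, hv⟩ := (Matrix.exists_mulVec_eq_zero_iff).mpr hdet
    set u : Es n := (WithLp.equiv 2 _).symm v with hu
    have hu0 : u ≠ 0 := by
      simp only [hu, ne_eq]
      intro hc
      exact hv0 (by simpa using congrArg (WithLp.equiv 2 _) hc)
    have hvv : WithLp.equiv 2 _ u = v := by simp [hu]
    have hTu : Tc A lam u = - (Matrix.toEuclideanCLM (𝕜 := ℂ) E0 u) := by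
      apply (WithLp.equiv 2 (Fin n → ℂ)).injective
      rw [equiv_Tc_apply]
      have h2 : WithLp.equiv 2 (Fin n → ℂ) (Matrix.toEuclideanCLM (𝕜 := ℂ) E0 u)
          = E0 *ᵥ v := by
        rw [piLp_equiv_toEuclideanCLM', Matrix.toLin'_apply, hvv]
      rw [WithLp.equiv_neg, h2, hvv]
      rw [Matrix.sub_mulVec, Matrix.add_mulVec, Matrix.smul_mulVec,
        Matrix.one_mulVec] at hv
      rw [Matrix.sub_mulVec, Matrix.smul_mulVec, Matrix.one_mulVec]
      have h3 : lam • v = A *ᵥ v + E0 *ᵥ v := by rwa [sub_eq_zero] at hv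
      rw [h3]; abel
    have hnorm : ‖Tc A lam u‖ ≤ δ * ‖u‖ := by
      rw [hTu, norm_neg]
      calc ‖Matrix.toEuclideanCLM (𝕜 := ℂ) E0 u‖
          ≤ ‖Matrix.toEuclideanCLM (𝕜 := ℂ) E0‖ * ‖u‖ :=
            (Matrix.toEuclideanCLM (𝕜 := ℂ) E0).le_opNorm u
        _ ≤ δ * ‖u‖ := by
            exact mul_le_mul_of_nonneg_right hE0 (norm_nonneg _)
    have hun : (0:ℝ) < ‖u‖ := norm_pos_iff.mpr hu0
    have hw1 : ‖(‖u‖⁻¹ • u : Es n)‖ = 1 := by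
      rw [norm_smul, norm_inv, norm_norm, inv_mul_cancel₀ hun.ne']
    calc sv A lam ≤ ‖Tc A lam (‖u‖⁻¹ • u)‖ := sv_le A lam hw1
      _ = ‖u‖⁻¹ * ‖Tc A lam u‖ := by
          rw [ContinuousLinearMap.map_smul_of_tower, norm_smul, norm_inv, norm_norm]
      _ ≤ ‖u‖⁻¹ * (δ * ‖u‖) := by
          exact mul_le_mul_of_nonneg_left hnorm (by positivity)
      _ = δ := by field_simp
  · intro h
    obtain ⟨v, hv1, hveq, -⟩ := exists_min A lam hn
    set v' : Fin n → ℂ := WithLp.equiv 2 _ v with hv'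
    set w : Es n := Tc A lam v with hwdef
    set w' : Fin n → ℂ := WithLp.equiv 2 _ w with hw'
    set E0 : Matrix (Fin n) (Fin n) ℂ :=
      Matrix.of fun i j => -(w' i) * (starRingEnd ℂ) (v' j) with hE0def
    have key : ∀ x : Es n, Matrix.toEuclideanCLM (𝕜 := ℂ) E0 x
        = -((inner ℂ v x : ℂ) • w) := by
      intro x
      apply (WithLp.equiv 2 (Fin n → ℂ)).injective
      rw [piLp_equiv_toEuclideanCLM', Matrix.toLin'_apply]
      funext i
      simp only [hE0def, Matrix.mulVec, dotProduct, Matrix.of_apply,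
        WithLp.equiv_neg, WithLp.equiv_smul, Pi.neg_apply, Pi.smul_apply,
        smul_eq_mul, PiLp.inner_apply, RCLike.inner_apply]
      rw [Finset.sum_mul]
      rw [← Finset.sum_neg_distrib]
      apply Finset.sum_congr rfl
      intro j _
      ring_nf
      simp only [hw', hv', WithLp.equiv_apply]; ring
    have hnormE : l2OpNorm E0 ≤ δ := by
      rw [l2OpNorm]
      refine ContinuousLinearMap.opNorm_le_bound _ hδ fun x => ?_
      rw [key x, norm_neg, norm_smul]
      calc ‖(inner ℂ v x : ℂ)‖ * ‖w‖ ≤ (‖v‖ * ‖x‖) * ‖w‖ :=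
            mul_le_mul_of_nonneg_right (norm_inner_le_norm v x) (norm_nonneg _)
        _ = ‖w‖ * ‖x‖ := by rw [hv1]; ring
        _ ≤ δ * ‖x‖ := by
            refine mul_le_mul_of_nonneg_right ?_ (norm_nonneg _)
            rw [hwdef, hveq]; exact h
    have heig : (A + E0) *ᵥ v' = lam • v' := by
      have hE0v : E0 *ᵥ v' = -w' := by
        have := key v
        have h2 := congrArg (WithLp.equiv 2 (Fin n → ℂ)) this
        rw [piLp_equiv_toEuclideanCLM', Matrix.toLin'_apply] at h2
        rw [← hv'] at h2
        rw [h2]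
        have hinner : (inner ℂ v v : ℂ) = 1 := by
          rw [inner_self_eq_norm_sq_to_K, hv1]
          norm_num
        rw [WithLp.equiv_neg, WithLp.equiv_smul, hinner, one_smul, hw']
      have hw'eq : w' = A *ᵥ v' - lam • v' := by
        rw [hw', hwdef, equiv_Tc_apply, Matrix.sub_mulVec, Matrix.smul_mulVec,
          Matrix.one_mulVec, hv']
      rw [Matrix.add_mulVec, hE0v, hw'eq]
      abel
    have hv'0 : v' ≠ 0 := by
      intro hc
      have : v = 0 := by
        apply (WithLp.equiv 2 (Fin n → ℂ)).injective
        simpa [hv'] using hc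
      rw [this] at hv1; simp at hv1
    have hdet : (lam • (1 : Matrix (Fin n) (Fin n) ℂ) - (A + E0)).det = 0 := by
      rw [← Matrix.exists_mulVec_eq_zero_iff]
      refine ⟨v', hv'0, ?_⟩
      rw [Matrix.sub_mulVec, Matrix.smul_mulVec, Matrix.one_mulVec, heig]
      abel
    have hspec : lam ∈ spectrum ℂ (A + E0) := by
      rw [spectrum.mem_iff, Algebra.algebraMap_eq_smul_one]
      intro hunit
      rw [Matrix.isUnit_iff_isUnit_det, hdet] at hunit
      exact (not_isUnit_zero : ¬ IsUnit (0:ℂ)) hunit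
    simp only [pseudospectrum, Set.mem_iUnion, Set.mem_setOf_eq]
    exact ⟨E0, hnormE, hspec⟩

lemma frontier_subset (hn : 1 ≤ n) {δ : ℝ} (hδ : 0 ≤ δ) :
    frontier (pseudospectrum δ A) ⊆ {lam | sv A lam = δ} := by
  intro lam hl
  have hset : pseudospectrum δ A = {x | sv A x ≤ δ} :=
    Set.ext fun x => mem_pseudospectrum_iff A x hn hδ
  have hcont : Continuous (sv A) := (sv_lipschitz A hn).continuous
  have hclosed : IsClosed (pseudospectrum δ A) := by
    rw [hset]; exact isClosed_le hcont continuous_const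
  rw [frontier, hclosed.closure_eq] at hl
  obtain ⟨hc, hni⟩ := hl
  have h1 : sv A lam ≤ δ := (hset ▸ hc :)
  have h2 : ¬ sv A lam < δ := by
    intro hlt
    apply hni
    refine interior_maximal ?_ (isOpen_lt hcont continuous_const) hlt
    rw [hset]; exact fun x hx => (le_of_lt hx : sv A x ≤ δ)
  exact le_antisymm h1 (not_lt.mp h2)

/-- the matrix `(A-λ)ᴴ(A-λ) - δ²`. -/
noncomputable def Nmat (δ : ℝ) : Matrix (Fin n) (Fin n) ℂ :=
  (A - lam • 1)ᴴ * (A - lam • 1) - ((δ ^ 2 : ℝ) : ℂ) • 1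

set_option synthInstance.maxHeartbeats 1000000 in
set_option maxHeartbeats 2000000 in
lemma det_Nmat_eq_zero (hn : 1 ≤ n) {δ : ℝ} (hδ : 0 ≤ δ) (h : sv A lam = δ) :
    (Nmat A lam δ).det = 0 := by
  obtain ⟨v, hv1, hveq, hmin⟩ := exists_min A lam hn
  set Sc : Es n →L[ℂ] Es n := star (Tc A lam) * Tc A lam with hScdef
  have hSA : IsSelfAdjoint Sc := by
    show star Sc = Sc
    rw [hScdef, StarMul.star_mul, star_star]
  have hre : ∀ x : Es n, Sc.reApplyInnerSelf x = ‖Tc A lam x‖ ^ 2 := by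
    intro x
    rw [ContinuousLinearMap.reApplyInnerSelf_apply, hScdef,
      ContinuousLinearMap.mul_apply, ContinuousLinearMap.star_eq_adjoint,
      ContinuousLinearMap.adjoint_inner_left]
    exact inner_self_eq_norm_sq _
  have hv0 : v ≠ 0 := by
    rw [← norm_ne_zero_iff, hv1]; exact one_ne_zero
  have hmin' : IsLocalExtrOn Sc.reApplyInnerSelf (Metric.sphere (0 : Es n) ‖v‖) v := by
    apply Or.inl
    apply IsMinOn.localize
    rw [hv1]
    intro x hx
    simp only [Set.mem_setOf_eq, hre]
    have h2 : ‖(Tc A lam) v‖ ≤ ‖(Tc A lam) x‖ := hmin hx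
    nlinarith [norm_nonneg ((Tc A lam) v), norm_nonneg ((Tc A lam) x)]
  have heig := hSA.hasEigenvector_of_isLocalExtrOn hv0 hmin'
  have hray : Sc.rayleighQuotient v = δ ^ 2 := by
    rw [ContinuousLinearMap.rayleighQuotient, hre, hveq, h, hv1]
    simp
  have hScv : Sc v = ((δ ^ 2 : ℝ) : ℂ) • v := by
    have h1 := heig.1
    rw [Module.End.mem_eigenspace_iff] at h1
    rw [hray] at h1
    exact h1
  have hmat : Matrix.toEuclideanCLM (𝕜 := ℂ) (Nmat A lam δ) v = 0 := by
    rw [Nmat, map_sub, _root_.map_smul, _root_.map_one, _root_.map_mul,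
      ← Matrix.star_eq_conjTranspose, map_star]
    have : (star (Matrix.toEuclideanCLM (𝕜 := ℂ) (A - lam • 1)) *
        Matrix.toEuclideanCLM (𝕜 := ℂ) (A - lam • 1)) = Sc := rfl
    rw [ContinuousLinearMap.sub_apply, this, hScv,
      ContinuousLinearMap.smul_apply, ContinuousLinearMap.one_apply, sub_self]
  rw [← Matrix.exists_mulVec_eq_zero_iff]
  refine ⟨WithLp.equiv 2 _ v, ?_, ?_⟩
  · intro hc
    apply hv0
    exact (WithLp.equiv 2 (Fin n → ℂ)).injective (by simpa using hc)
  · have := congrArg (WithLp.equiv 2 (Fin n → ℂ)) hmat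
    rw [piLp_equiv_toEuclideanCLM', Matrix.toLin'_apply] at this
    simpa using this

set_option synthInstance.maxHeartbeats 1000000 in
set_option maxHeartbeats 2000000 in
lemma posDef_Nmat {δ : ℝ} (hδ : 0 ≤ δ)
    (hl : ∀ v : Es n, (δ + 1) * ‖v‖ ≤ ‖Tc A lam v‖) : (Nmat A lam δ).PosDef := by
  rw [Matrix.posDef_iff_dotProduct_mulVec]
  constructor
  · show (Nmat A lam δ)ᴴ = Nmat A lam δ
    rw [Nmat]
    rw [Matrix.conjTranspose_sub, Matrix.conjTranspose_smul,
      Matrix.conjTranspose_one, Matrix.conjTranspose_mul,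
      Matrix.conjTranspose_conjTranspose, Complex.star_def, Complex.conj_ofReal]
  · intro x hx
    set u : Es n := (WithLp.equiv 2 _).symm x with hu
    have hux : WithLp.equiv 2 (Fin n → ℂ) u = x := by simp [hu]
    have hu0 : u ≠ 0 := by
      intro hc
      exact hx (by simpa [hc] using hux.symm)
    have hdot : dotProduct (star x) ((Nmat A lam δ) *ᵥ x)
        = ((‖Tc A lam u‖ ^ 2 - δ ^ 2 * ‖u‖ ^ 2 : ℝ) : ℂ) := by
      rw [Nmat, Matrix.sub_mulVec, Matrix.smul_mulVec, Matrix.one_mulVec,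
        dotProduct_sub, dotProduct_smul]
      have e1 : dotProduct (star x) (((A - lam • 1)ᴴ * (A - lam • 1)) *ᵥ x)
          = (inner ℂ u (Matrix.toEuclideanCLM (𝕜 := ℂ) ((A - lam • 1)ᴴ * (A - lam • 1)) u) : ℂ) := by
        rw [EuclideanSpace.inner_eq_star_dotProduct, dotProduct_comm, ← hux]
        rfl
      have e2 : (inner ℂ u (Matrix.toEuclideanCLM (𝕜 := ℂ) ((A - lam • 1)ᴴ * (A - lam • 1)) u) : ℂ)
          = ((‖Tc A lam u‖ ^ 2 : ℝ) : ℂ) := by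
        rw [← Matrix.star_eq_conjTranspose, _root_.map_mul, map_star]
        have hop : star (Matrix.toEuclideanCLM (𝕜 := ℂ) (A - lam • 1)) *
            Matrix.toEuclideanCLM (𝕜 := ℂ) (A - lam • 1)
            = ContinuousLinearMap.adjoint (Tc A lam) * (Tc A lam) := rfl
        rw [hop, ContinuousLinearMap.mul_apply,
          ContinuousLinearMap.adjoint_inner_right, inner_self_eq_norm_sq_to_K]
        norm_cast
      have e3 : dotProduct (star x) x = ((‖u‖ ^ 2 : ℝ) : ℂ) := by
        rw [← hux, dotProduct_comm, WithLp.equiv_apply, ← EuclideanSpace.inner_eq_star_dotProduct,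
          inner_self_eq_norm_sq_to_K]
        norm_cast
      rw [e1, e2, e3, smul_eq_mul]
      push_cast
      ring
    rw [hdot]
    rw [Complex.zero_lt_real]
    have hu1 : (0:ℝ) < ‖u‖ := norm_pos_iff.mpr hu0
    have h2 := hl u
    nlinarith [mul_le_mul h2 h2 (by positivity : (0:ℝ) ≤ (δ + 1) * ‖u‖) (norm_nonneg ((Tc A lam) u)),
      mul_pos hu1 hu1]

/-- matrix of polynomials whose determinant cuts out the curve -/
noncomputable def Pmat (δ : ℝ) : Matrix (Fin n) (Fin n) (MvPolynomial (Fin 2) ℂ) :=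
  ((Aᴴ.map MvPolynomial.C) - ((X 0 - MvPolynomial.C Complex.I * X 1 : MvPolynomial (Fin 2) ℂ)) • 1) *
    ((A.map MvPolynomial.C) - ((X 0 + MvPolynomial.C Complex.I * X 1 : MvPolynomial (Fin 2) ℂ)) • 1) -
    (MvPolynomial.C (((δ ^ 2 : ℝ)) : ℂ) : MvPolynomial (Fin 2) ℂ) • (1 : Matrix (Fin n) (Fin n) (MvPolynomial (Fin 2) ℂ))

lemma eval_Pmat_det (δ : ℝ) :
    MvPolynomial.eval ![(lam.re : ℂ), (lam.im : ℂ)] (Pmat A δ).det = (Nmat A lam δ).det := by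
  rw [RingHom.map_det]
  congr 1
  ext i j
  simp only [Pmat, Nmat, RingHom.mapMatrix_apply, Matrix.map_apply, Matrix.sub_apply,
    Matrix.smul_apply, Matrix.mul_apply, Matrix.one_apply, Matrix.conjTranspose_apply,
    smul_eq_mul, map_sub, _root_.map_mul, map_sum, map_add, MvPolynomial.eval_C,
    MvPolynomial.eval_X, apply_ite (MvPolynomial.eval ![(lam.re : ℂ), (lam.im : ℂ)]),
    _root_.map_one, _root_.map_zero, Matrix.cons_val_zero, Matrix.cons_val_one,
    Matrix.head_cons, mul_ite, mul_one, mul_zero]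
  congr 1
  apply Finset.sum_congr rfl
  intro k _
  have hstar : (starRingEnd ℂ) lam = (lam.re : ℂ) - (lam.im : ℂ) * Complex.I := by
    apply Complex.ext <;> simp
  have e1 : ((if i = k then (1:ℂ) else 0)) = (if k = i then 1 else 0) :=
    if_congr eq_comm rfl rfl
  simp only [Complex.star_def]
  rw [map_sub, apply_ite (starRingEnd ℂ), _root_.map_zero]
  rw [show ((lam.re : ℂ) + Complex.I * (lam.im : ℂ)) = lam by
      rw [mul_comm]; exact Complex.re_add_im lam,
    show ((lam.re : ℂ) - Complex.I * (lam.im : ℂ)) = (starRingEnd ℂ) lam by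
      rw [hstar]; ring]
  rw [show (if i = k then (starRingEnd ℂ) lam else 0)
      = (if k = i then (starRingEnd ℂ) lam else 0) from if_congr eq_comm rfl rfl]

noncomputable def qpoly (δ : ℝ) : MvPolynomial (Fin 2) ℝ :=
  ∑ m ∈ (Pmat A δ).det.support, MvPolynomial.monomial m (((Pmat A δ).det.coeff m).re)

lemma eval_qpoly (δ : ℝ) (x y : ℝ) :
    MvPolynomial.eval ![x, y] (qpoly A δ) =
      (MvPolynomial.eval ![(x : ℂ), (y : ℂ)] (Pmat A δ).det).re := by
  rw [qpoly, map_sum, MvPolynomial.eval_eq (![(x : ℂ), (y : ℂ)]) (Pmat A δ).det,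
    Complex.re_sum]
  apply Finset.sum_congr rfl
  intro m hm
  rw [MvPolynomial.eval_monomial]
  have hprod : (∏ i ∈ m.support, (![(x : ℂ), (y : ℂ)]) i ^ m i)
      = (((∏ i ∈ m.support, (![x, y]) i ^ m i : ℝ)) : ℂ) := by
    push_cast
    apply Finset.prod_congr rfl
    intro i _
    congr 1
    fin_cases i <;> simp
  rw [hprod, Complex.mul_re, Complex.ofReal_re, Complex.ofReal_im, mul_zero, sub_zero]
  rw [Finsupp.prod]

end PseudoAux

/-- The boundary of the δ-pseudospectrum is contained in a real algebraic curve: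
there is a nonzero real polynomial `q` in two variables vanishing at every
boundary point `λ = x + iy`. -/
theorem boundary_pseudospectrum_subset_algebraic_curve
    {n : ℕ} (hn : 1 ≤ n) (A : Matrix (Fin n) (Fin n) ℂ) (δ : ℝ) (hδ : 0 < δ) :
    ∃ q : MvPolynomial (Fin 2) ℝ, q ≠ 0 ∧
      ∀ lam ∈ frontier (pseudospectrum δ A),
        MvPolynomial.eval ![lam.re, lam.im] q = 0 := by
  classical
  refine ⟨PseudoAux.qpoly A δ, ?_, ?_⟩
  · set c : ℝ := l2OpNorm A + δ + 1 with hc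
    have hA0 : 0 ≤ l2OpNorm A := norm_nonneg _
    have hl : ∀ v : PseudoAux.Es n, (δ + 1) * ‖v‖ ≤ ‖PseudoAux.Tc A (c : ℂ) v‖ := by
      intro v
      have h1 : PseudoAux.Tc A (c : ℂ) v
          = Matrix.toEuclideanCLM (𝕜 := ℂ) A v - (c : ℂ) • v :=
        PseudoAux.Tc_apply_eq A (c : ℂ) v
      have h2 : ‖(c : ℂ) • v‖ = c * ‖v‖ := by
        rw [norm_smul, Complex.norm_real, Real.norm_eq_abs,
          abs_of_nonneg (by positivity)]
      have h3 : ‖Matrix.toEuclideanCLM (𝕜 := ℂ) A v‖ ≤ l2OpNorm A * ‖v‖ :=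
        (Matrix.toEuclideanCLM (𝕜 := ℂ) A).le_opNorm v
      calc (δ + 1) * ‖v‖ = c * ‖v‖ - l2OpNorm A * ‖v‖ := by rw [hc]; ring
        _ ≤ ‖(c : ℂ) • v‖ - ‖Matrix.toEuclideanCLM (𝕜 := ℂ) A v‖ := by
            rw [h2]; linarith
        _ ≤ ‖(c : ℂ) • v - Matrix.toEuclideanCLM (𝕜 := ℂ) A v‖ :=
            norm_sub_norm_le _ _
        _ = ‖PseudoAux.Tc A (c : ℂ) v‖ := by rw [h1, norm_sub_rev]
    have hpd := PseudoAux.posDef_Nmat A (c : ℂ) hδ.le hl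
    have hdetpos := hpd.det_pos
    have hre : 0 < (PseudoAux.Nmat A (c : ℂ) δ).det.re := by
      rw [Complex.lt_def] at hdetpos
      simpa using hdetpos.1
    intro h0
    have hev := PseudoAux.eval_qpoly A δ c 0
    rw [h0] at hev
    simp only [_root_.map_zero] at hev
    have h2 := PseudoAux.eval_Pmat_det A (c : ℂ) δ
    rw [Complex.ofReal_re, Complex.ofReal_im, Complex.ofReal_zero] at h2
    rw [Complex.ofReal_zero] at hev
    rw [h2] at hev
    linarith
  · intro lam hfront
    have hsv : PseudoAux.sv A lam = δ :=
      PseudoAux.frontier_subset A hn hδ.le hfront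
    have hdet := PseudoAux.det_Nmat_eq_zero A lam hn hδ.le hsv
    rw [PseudoAux.eval_qpoly A δ lam.re lam.im, PseudoAux.eval_Pmat_det A lam δ,
      hdet]
    simp
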